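/- arXiv:2105.08177 — 3 statements merged into one kernel-verified Lean document; each statement's English description precedes it below -/
import Mathlib

section
/- Let M ≥ 1 and u, v : Fin M → ℝ. The power sums of u and v agree up to order M, i.e., Σ_{m=1}^{M} (u_m)^q = Σ_{m=1}^{M} (v_m)^q for every q = 1, …, M, if and only if v is a permutation of u, i.e., there exists a permutation σ of Fin M with v_m = u_{σ(m)} for all m. -/
open Finset MvPolynomial Polynomial

/-- Newton's identities imply that equal power sums up to `M` give equal
elementary symmetric function values up to `M`. -/
lemma esymm_eval_eq_of_powerSums_eq (M : ℕ) (u v : Fin M → ℝ)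
    (h : ∀ q : ℕ, 1 ≤ q → q ≤ M → ∑ m, u m ^ q = ∑ m, v m ^ q) :
    ∀ k : ℕ, k ≤ M →
      MvPolynomial.eval u (MvPolynomial.esymm (Fin M) ℝ k) =
        MvPolynomial.eval v (MvPolynomial.esymm (Fin M) ℝ k) := by
  intro k
  induction k using Nat.strong_induction_on with
  | _ k ih =>
    intro hkM
    rcases Nat.eq_zero_or_pos k with rfl | hk
    · simp [MvPolynomial.esymm_zero]
    · have hu := congrArg (MvPolynomial.eval u) (MvPolynomial.mul_esymm_eq_sum (Fin M) ℝ k)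
      have hv := congrArg (MvPolynomial.eval v) (MvPolynomial.mul_esymm_eq_sum (Fin M) ℝ k)
      simp only [map_mul, map_sum, map_pow, map_neg, map_one, map_natCast] at hu hv
      have hterm : ∀ a ∈ Finset.filter (fun a => a.1 < k) (Finset.HasAntidiagonal.antidiagonal k),
          (-1 : ℝ) ^ a.1 * MvPolynomial.eval u (MvPolynomial.esymm (Fin M) ℝ a.1) *
              MvPolynomial.eval u (MvPolynomial.psum (Fin M) ℝ a.2) =
          (-1 : ℝ) ^ a.1 * MvPolynomial.eval v (MvPolynomial.esymm (Fin M) ℝ a.1) *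
              MvPolynomial.eval v (MvPolynomial.psum (Fin M) ℝ a.2) := by
        intro a ha
        simp only [Finset.mem_filter, Finset.HasAntidiagonal.mem_antidiagonal] at ha
        obtain ⟨hsum, hlt⟩ := ha
        have he := ih a.1 hlt (le_trans (le_of_lt hlt) hkM)
        have h2pos : 1 ≤ a.2 := by omega
        have h2le : a.2 ≤ M := by omega
        have hp : MvPolynomial.eval u (MvPolynomial.psum (Fin M) ℝ a.2) =
            MvPolynomial.eval v (MvPolynomial.psum (Fin M) ℝ a.2) := by
          simpa [MvPolynomial.psum] using h a.2 h2pos h2le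
        rw [he, hp]
      have hknz : (k : ℝ) ≠ 0 := Nat.cast_ne_zero.mpr hk.ne'
      have hs := Finset.sum_congr rfl hterm
      have : (k : ℝ) * MvPolynomial.eval u (MvPolynomial.esymm (Fin M) ℝ k)
          = (k : ℝ) * MvPolynomial.eval v (MvPolynomial.esymm (Fin M) ℝ k) := by
        rw [hu, hv, hs]
      exact mul_left_cancel₀ hknz this

/-- For `M ≥ 1` and real `M`-tuples `u, v`, the power sums agree
up to order `M` (`∑_m (u_m)^q = ∑_m (v_m)^q` for all `q = 1, …, M`) if and only
if `v` is a permutation of `u`, i.e. there is `σ : Perm (Fin M)` with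
`v_m = u_{σ m}` for all `m`. -/
theorem powerSums_eq_iff_exists_perm (M : ℕ) (hM : 1 ≤ M) (u v : Fin M → ℝ) :
    (∀ q : ℕ, 1 ≤ q → q ≤ M → ∑ m, u m ^ q = ∑ m, v m ^ q) ↔
      ∃ σ : Equiv.Perm (Fin M), ∀ m, v m = u (σ m) := by
  constructor
  · intro h
    -- equal esymm values
    have hesymm : ∀ k : ℕ, k ≤ M →
        ((Finset.univ.val.map u).esymm k) = ((Finset.univ.val.map v).esymm k) := by
      intro k hk
      have := esymm_eval_eq_of_powerSums_eq M u v h k hk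
      have hu : MvPolynomial.eval u (MvPolynomial.esymm (Fin M) ℝ k)
          = (Finset.univ.val.map u).esymm k := by
        simpa using MvPolynomial.aeval_esymm_eq_multiset_esymm (Fin M) ℝ k u
      have hv : MvPolynomial.eval v (MvPolynomial.esymm (Fin M) ℝ k)
          = (Finset.univ.val.map v).esymm k := by
        simpa using MvPolynomial.aeval_esymm_eq_multiset_esymm (Fin M) ℝ k v
      rw [← hu, ← hv, this]
    -- equal polynomials ∏ (X - u i)
    have hcardu : Multiset.card (Finset.univ.val.map u) = M := by simp
    have hcardv : Multiset.card (Finset.univ.val.map v) = M := by simp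
    have hpoly : ((Finset.univ.val.map u).map fun t => Polynomial.X - Polynomial.C t).prod =
        ((Finset.univ.val.map v).map fun t => Polynomial.X - Polynomial.C t).prod := by
      apply Polynomial.ext
      intro n
      rcases le_or_gt n M with hn | hn
      · rw [Multiset.prod_X_sub_C_coeff _ (by rw [hcardu]; exact hn),
          Multiset.prod_X_sub_C_coeff _ (by rw [hcardv]; exact hn), hcardu, hcardv,
          hesymm (M - n) (Nat.sub_le _ _)]
      · have hu : ((Finset.univ.val.map u).map fun t => Polynomial.X - Polynomial.C t).prod.natDegree = M := by
          rw [Polynomial.natDegree_multiset_prod_X_sub_C_eq_card, hcardu]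
        have hv : ((Finset.univ.val.map v).map fun t => Polynomial.X - Polynomial.C t).prod.natDegree = M := by
          rw [Polynomial.natDegree_multiset_prod_X_sub_C_eq_card, hcardv]
        rw [Polynomial.coeff_eq_zero_of_natDegree_lt (by rw [hu]; exact hn),
          Polynomial.coeff_eq_zero_of_natDegree_lt (by rw [hv]; exact hn)]
    -- equal root multisets
    have hmult : (Finset.univ.val.map u) = (Finset.univ.val.map v) := by
      have := congrArg Polynomial.roots hpoly
      rwa [Polynomial.roots_multiset_prod_X_sub_C, Polynomial.roots_multiset_prod_X_sub_C] at this
    -- turn multiset equality into a permutation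
    have hof : (List.ofFn u : Multiset ℝ) = (List.ofFn v : Multiset ℝ) := by
      have hu : (Finset.univ.val.map u) = (List.ofFn u : Multiset ℝ) := by
        simp [List.ofFn_eq_map, ← Multiset.map_coe, Fin.univ_def]
      have hv : (Finset.univ.val.map v) = (List.ofFn v : Multiset ℝ) := by
        simp [List.ofFn_eq_map, ← Multiset.map_coe, Fin.univ_def]
      rw [← hu, ← hv, hmult]
    have hperm : (List.ofFn u).Perm (List.ofFn v) := Multiset.coe_eq_coe.mp hof
    -- sorted versions are equal
    have hmonu := Tuple.monotone_sort u
    have hmonv := Tuple.monotone_sort v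
    have hpermsort : (List.ofFn (u ∘ Tuple.sort u)).Perm (List.ofFn (v ∘ Tuple.sort v)) :=
      ((Equiv.Perm.ofFn_comp_perm (Tuple.sort u) u).trans hperm).trans
        (Equiv.Perm.ofFn_comp_perm (Tuple.sort v) v).symm
    have hsorted : u ∘ Tuple.sort u = v ∘ Tuple.sort v :=
      List.ofFn_injective <|
        List.Perm.eq_of_sortedLE (List.sortedLE_ofFn_iff.mpr hmonu) (List.sortedLE_ofFn_iff.mpr hmonv) hpermsort
    refine ⟨(Tuple.sort v).symm.trans (Tuple.sort u), fun m => ?_⟩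
    have := congrFun hsorted ((Tuple.sort v).symm m)
    simp only [Function.comp_apply, Equiv.apply_symm_apply] at this
    simpa [Equiv.trans_apply] using this.symm
  · rintro ⟨σ, hσ⟩ q _ _
    calc ∑ m, u m ^ q = ∑ m, u (σ m) ^ q := (Equiv.sum_comp σ fun m => u m ^ q).symm
      _ = ∑ m, v m ^ q := by simp [hσ]
end

section
/- Let M ≥ 1 and let f : ℝ^M → ℝ be continuous and permutation invariant on [0,1]^M, i.e., f(x_{σ(1)}, …, x_{σ(M)}) = f(x_1, …, x_M) for every x ∈ [0,1]^M and every permutation σ of {1, …, M}. Then there exists a continuous function Φ : ℝ^{M+1} → ℝ such that f(x) = Φ(E(x)) for all x ∈ [0,1]^M, where E is the sum-of-power mapping. In other words, every continuous permutation-invariant function on [0,1]^M factors continuously through sum pooling of the power-sum features Ψ(t) = (1, t, t^2, …, t^M). -/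
private lemma aeval_psum {M : ℕ} (x : Fin M → ℝ) (k : ℕ) :
    MvPolynomial.aeval x (MvPolynomial.psum (Fin M) ℝ k) = ∑ i, x i ^ k := by
  simp [MvPolynomial.psum]

private lemma esymm_eq_of_psum_eq {M : ℕ} (x y : Fin M → ℝ)
    (hp : ∀ k, 1 ≤ k → k ≤ M → ∑ i, x i ^ k = ∑ i, y i ^ k) :
    ∀ k, k ≤ M →
      (Finset.univ.val.map x).esymm k = (Finset.univ.val.map y).esymm k := by
  intro k
  induction k using Nat.strong_induction_on with
  | _ k ih =>
    intro hkM
    rcases Nat.eq_zero_or_pos k with rfl | hk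
    · simp [Multiset.esymm]
    · have hx := congrArg (MvPolynomial.aeval x) (MvPolynomial.mul_esymm_eq_sum (Fin M) ℝ k)
      have hy := congrArg (MvPolynomial.aeval y) (MvPolynomial.mul_esymm_eq_sum (Fin M) ℝ k)
      rw [map_mul, map_natCast, MvPolynomial.aeval_esymm_eq_multiset_esymm] at hx hy
      have hk0 : (k : ℝ) ≠ 0 := Nat.cast_ne_zero.mpr (by omega)
      refine mul_left_cancel₀ hk0 ?_
      rw [hx, hy]
      simp only [map_mul, map_sum, map_pow, map_neg, map_one]
      congr 1
      refine Finset.sum_congr rfl ?_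
      intro a ha
      simp only [Finset.mem_filter, Finset.HasAntidiagonal.mem_antidiagonal] at ha
      rw [MvPolynomial.aeval_esymm_eq_multiset_esymm, MvPolynomial.aeval_esymm_eq_multiset_esymm,
        aeval_psum, aeval_psum, ih a.1 ha.2 (by omega), hp a.2 (by omega) (by omega)]

private lemma multiset_eq_of_psum_eq {M : ℕ} (x y : Fin M → ℝ)
    (hp : ∀ k, 1 ≤ k → k ≤ M → ∑ i, x i ^ k = ∑ i, y i ^ k) :
    Finset.univ.val.map x = Finset.univ.val.map y := by
  have hcx : Multiset.card (Finset.univ.val.map x) = M := by simp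
  have hcy : Multiset.card (Finset.univ.val.map y) = M := by simp
  have hP : ((Finset.univ.val.map x).map fun t => Polynomial.X - Polynomial.C t).prod =
      ((Finset.univ.val.map y).map fun t => Polynomial.X - Polynomial.C t).prod := by
    ext n
    by_cases hn : n ≤ M
    · rw [Multiset.prod_X_sub_C_coeff _ (le_of_le_of_eq hn hcx.symm),
        Multiset.prod_X_sub_C_coeff _ (le_of_le_of_eq hn hcy.symm),
        hcx, hcy, esymm_eq_of_psum_eq x y hp (M - n) (Nat.sub_le _ _)]
    · rw [Polynomial.coeff_eq_zero_of_natDegree_lt, Polynomial.coeff_eq_zero_of_natDegree_lt]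
      · rw [Polynomial.natDegree_multiset_prod_X_sub_C_eq_card, hcy]; omega
      · rw [Polynomial.natDegree_multiset_prod_X_sub_C_eq_card, hcx]; omega
  have h2 := congrArg Polynomial.roots hP
  rwa [Polynomial.roots_multiset_prod_X_sub_C, Polynomial.roots_multiset_prod_X_sub_C] at h2

private lemma exists_perm_of_multiset_eq {M : ℕ} (x y : Fin M → ℝ)
    (h : Finset.univ.val.map x = Finset.univ.val.map y) :
    ∃ σ : Equiv.Perm (Fin M), x ∘ σ = y := by
  rw [Fin.univ_val_map, Fin.univ_val_map, Multiset.coe_eq_coe] at h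
  set s := Tuple.sort x
  set t := Tuple.sort y
  have hms : Monotone (x ∘ s) := Tuple.monotone_sort x
  have hmt : Monotone (y ∘ t) := Tuple.monotone_sort y
  have hperm : (List.ofFn (x ∘ s)).Perm (List.ofFn (y ∘ t)) :=
    ((Equiv.Perm.ofFn_comp_perm s x).trans h).trans (Equiv.Perm.ofFn_comp_perm t y).symm
  have heq : List.ofFn (x ∘ s) = List.ofFn (y ∘ t) :=
    List.Perm.eq_of_sortedLE hms.sortedLE_ofFn hmt.sortedLE_ofFn hperm
  have hfun : x ∘ s = y ∘ t := List.ofFn_injective heq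
  refine ⟨s * t⁻¹, funext fun i => ?_⟩
  have := congrFun hfun (t⁻¹ i)
  simpa using this

/-- Every continuous function `f : ℝ^M → ℝ` (`M ≥ 1`) that is
permutation invariant on `[0,1]^M` factors continuously through the
sum-of-power mapping `E : ℝ^M → ℝ^{M+1}`, `E_q(x) = ∑_m (x_m)^q` for
`q = 0, …, M`: there is a continuous `Φ : ℝ^{M+1} → ℝ` with `f(x) = Φ(E(x))`
for all `x ∈ [0,1]^M`. -/
theorem perm_invariant_factors_through_power_sums (M : ℕ) (hM : 1 ≤ M)
    (f : (Fin M → ℝ) → ℝ) (hf : Continuous f)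
    (hinv : ∀ x : Fin M → ℝ, (∀ i, x i ∈ Set.Icc (0 : ℝ) 1) →
      ∀ σ : Equiv.Perm (Fin M), f (x ∘ σ) = f x) :
    ∃ Φ : (Fin (M + 1) → ℝ) → ℝ, Continuous Φ ∧
      ∀ x : Fin M → ℝ, (∀ i, x i ∈ Set.Icc (0 : ℝ) 1) →
        f x = Φ (fun q => ∑ m, x m ^ (q : ℕ)) := by
  classical
  set K : Set (Fin M → ℝ) := Set.Icc 0 1 with hKdef
  have hmemK : ∀ z : Fin M → ℝ, z ∈ K ↔ ∀ i, z i ∈ Set.Icc (0 : ℝ) 1 := by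
    intro z
    simp [hKdef, Set.mem_Icc, Pi.le_def, forall_and]
  have hK : IsCompact K := isCompact_Icc
  set E : (Fin M → ℝ) → (Fin (M + 1) → ℝ) := fun x q => ∑ m, x m ^ (q : ℕ) with hEdef
  have hE : Continuous E := by
    apply continuous_pi
    intro q
    exact continuous_finset_sum _ fun m _ => (continuous_apply m).pow _
  -- key: E determines f on K
  have key : ∀ z₁ z₂ : Fin M → ℝ, z₁ ∈ K → z₂ ∈ K → E z₁ = E z₂ → f z₁ = f z₂ := by
    intro z₁ z₂ h₁ h₂ hEz
    have hp : ∀ k, 1 ≤ k → k ≤ M → ∑ i, z₁ i ^ k = ∑ i, z₂ i ^ k := by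
      intro k hk1 hkM
      have := congrFun hEz ⟨k, by omega⟩
      simpa using this
    obtain ⟨σ, hσ⟩ := exists_perm_of_multiset_eq z₁ z₂ (multiset_eq_of_psum_eq z₁ z₂ hp)
    have := hinv z₁ ((hmemK z₁).mp h₁) σ
    rw [hσ] at this
    exact this.symm
  -- quotient map structure
  haveI : CompactSpace K := isCompact_iff_compactSpace.mp hK
  let e : K → (E '' K) := fun z => ⟨E z, ⟨(z : Fin M → ℝ), z.2, rfl⟩⟩
  have he : Continuous e := (hE.comp continuous_subtype_val).subtype_mk _
  have hsurj : Function.Surjective e := by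
    rintro ⟨-, z, hz, rfl⟩
    exact ⟨⟨z, hz⟩, rfl⟩
  have hq : Topology.IsQuotientMap e := Topology.IsQuotientMap.of_surjective_continuous hsurj he
  have hchoice : ∀ w : E '' K, ∃ z : Fin M → ℝ, z ∈ K ∧ E z = (w : Fin (M + 1) → ℝ) := by
    rintro ⟨-, z, hz, rfl⟩
    exact ⟨z, hz, rfl⟩
  choose ζ hζK hζE using hchoice
  set g : (E '' K) → ℝ := fun w => f (ζ w) with hgdef
  have hge : ∀ z : K, g (e z) = f z := by
    intro z
    exact key _ _ (hζK _) z.2 (hζE (e z))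
  have hg : Continuous g := by
    rw [hq.continuous_iff]
    have : g ∘ e = fun z : K => f z := funext hge
    rw [this]
    exact hf.comp continuous_subtype_val
  have hclosed : IsClosed (E '' K) := (hK.image hE).isClosed
  obtain ⟨Φc, hΦc⟩ := (ContinuousMap.mk g hg).exists_restrict_eq hclosed
  refine ⟨Φc, Φc.continuous, ?_⟩
  intro x hx
  have hxK : x ∈ K := (hmemK x).mpr hx
  have hmem : E x ∈ E '' K := ⟨x, hxK, rfl⟩
  have h1 : Φc (E x) = g ⟨E x, hmem⟩ := by
    have := congrFun (congrArg DFunLike.coe hΦc) ⟨E x, hmem⟩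
    simpa using this
  have h2 : g ⟨E x, hmem⟩ = f x := hge ⟨x, hxK⟩
  rw [← h2, ← h1]
end

section
/- Let M ≥ 1 and let V : ℂ^M → ℂ^M be the Vieta map sending an M-tuple of roots z = (z_1, …, z_M) to the tuple of non-leading coefficients (c_1, …, c_M) of the monic polynomial ∏_{m=1}^{M}(X − z_m) = X^M + c_1 X^{M−1} + ⋯ + c_M. Then V is continuous, surjective, and a topological quotient map, and its fibers are exactly the permutation orbits: V(u) = V(v) if and only if there exists a permutation σ of Fin M with v = u ∘ σ. Consequently V induces a homeomorphism from the quotient ℂ^M / S_M (unordered M-tuples with the quotient topology) onto ℂ^M. -/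
/-- The Vieta map `ℂ^M → ℂ^M` sending roots `(z_1, …, z_M)` to the non-leading
coefficients `(c_1, …, c_M)` of `∏_m (X - z_m) = X^M + c_1 X^{M-1} + ⋯ + c_M`;
the `k`-th entry (for `k : Fin M`, i.e. `c_{k+1}`) is the coefficient of
`X^{M-1-k}`. -/
noncomputable def vieta (M : ℕ) (z : Fin M → ℂ) : Fin M → ℂ :=
  fun k => (∏ m, (Polynomial.X - Polynomial.C (z m))).coeff (M - 1 - (k : ℕ))


section VietaAux
open Polynomial Finset

lemma vietaAux.prod_eq {M : ℕ} (z : Fin M → ℂ) :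
    (∏ m, (X - C (z m))) = ((Finset.univ.val.map z).map fun a => X - C a).prod := by
  rw [Finset.prod_eq_multiset_prod, Multiset.map_map]; rfl

lemma vietaAux.roots_eq {M : ℕ} (z : Fin M → ℂ) :
    (∏ m, (X - C (z m))).roots = Finset.univ.val.map z := by
  rw [vietaAux.prod_eq, roots_multiset_prod_X_sub_C]

lemma vietaAux.monic {M : ℕ} (z : Fin M → ℂ) : (∏ m, (X - C (z m))).Monic :=
  monic_prod_of_monic _ _ fun m _ => monic_X_sub_C (z m)

lemma vietaAux.natDegree_eq {M : ℕ} (z : Fin M → ℂ) :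
    (∏ m, (X - C (z m))).natDegree = M := by
  rw [vietaAux.prod_eq, natDegree_multiset_prod_X_sub_C_eq_card]; simp

lemma vietaAux.exists_perm {α : Type*} : ∀ {n : ℕ} {u v : Fin n → α},
    (List.ofFn u).Perm (List.ofFn v) → ∃ σ : Equiv.Perm (Fin n), v = u ∘ σ
  | 0, u, v, _ => ⟨1, funext fun i => i.elim0⟩
  | n + 1, u, v, h => by
    have h0 : v 0 ∈ List.ofFn u := h.symm.subset (by rw [List.mem_ofFn]; exact ⟨0, rfl⟩)
    rw [List.mem_ofFn] at h0
    obtain ⟨i, hi⟩ := h0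
    have hperm : (List.ofFn (u ∘ Equiv.swap 0 i)).Perm (List.ofFn v) :=
      (Equiv.Perm.ofFn_comp_perm _ u).trans h
    rw [List.ofFn_succ, List.ofFn_succ] at hperm
    have h00 : (u ∘ Equiv.swap 0 i) 0 = v 0 := by simp [hi]
    rw [h00] at hperm
    obtain ⟨σ', hσ'⟩ := vietaAux.exists_perm hperm.cons_inv
    refine ⟨Equiv.Perm.decomposeFin.symm (i, σ'), funext fun x => ?_⟩
    refine Fin.cases ?_ (fun j => ?_) x
    · simpa using hi.symm
    · have := congrFun hσ' j
      simp only [Function.comp_apply] at this ⊢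
      rw [Equiv.Perm.decomposeFin_symm_apply_succ]
      exact this

lemma vietaAux.fiber {M : ℕ} (hM : 1 ≤ M) (u v : Fin M → ℂ) :
    vieta M u = vieta M v ↔ ∃ σ : Equiv.Perm (Fin M), v = u ∘ σ := by
  constructor
  · intro h
    have hP : (∏ m, (X - C (u m))) = ∏ m, (X - C (v m)) := by
      ext n
      rcases lt_trichotomy n M with hn | hn | hn
      · have hk := congrFun h ⟨M - 1 - n, by omega⟩
        simpa [vieta, show M - 1 - (M - 1 - n) = n by omega] using hk
      · have h1 := (vietaAux.monic u).coeff_natDegree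
        have h2 := (vietaAux.monic v).coeff_natDegree
        rw [vietaAux.natDegree_eq] at h1 h2
        rw [hn, h1, h2]
      · rw [coeff_eq_zero_of_natDegree_lt (by rw [vietaAux.natDegree_eq]; exact hn),
          coeff_eq_zero_of_natDegree_lt (by rw [vietaAux.natDegree_eq]; exact hn)]
    have hroots : (Finset.univ.val.map u) = Finset.univ.val.map v := by
      rw [← vietaAux.roots_eq, ← vietaAux.roots_eq, hP]
    rw [Fin.univ_val_map, Fin.univ_val_map, Multiset.coe_eq_coe] at hroots
    exact vietaAux.exists_perm hroots
  · rintro ⟨σ, rfl⟩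
    funext k
    unfold vieta
    congr 1
    exact (Equiv.prod_comp σ fun m => X - C (u m)).symm

lemma vietaAux.vieta_eq {M : ℕ} (z : Fin M → ℂ) (k : Fin M) :
    vieta M z k = (-1) ^ (M - (M - 1 - (k : ℕ))) *
      ∑ t ∈ Finset.powersetCard (M - (M - 1 - (k : ℕ))) Finset.univ, ∏ i ∈ t, z i := by
  have hcard : Multiset.card (Finset.univ.val.map z) = M := by simp
  have hk : M - 1 - (k : ℕ) ≤ Multiset.card (Finset.univ.val.map z) := by
    rw [hcard]; omega
  rw [vieta, vietaAux.prod_eq, Multiset.prod_X_sub_C_coeff _ hk, hcard,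
    Finset.esymm_map_val]

lemma vietaAux.continuous (M : ℕ) : Continuous (vieta M) := by
  refine continuous_pi fun k => ?_
  have : (fun z => vieta M z k) = fun z : Fin M → ℂ => (-1) ^ (M - (M - 1 - (k : ℕ))) *
      ∑ t ∈ Finset.powersetCard (M - (M - 1 - (k : ℕ))) Finset.univ, ∏ i ∈ t, z i :=
    funext fun z => vietaAux.vieta_eq z k
  rw [this]
  exact continuous_const.mul (continuous_finset_sum _ fun t _ =>
    continuous_finset_prod _ fun i _ => continuous_apply i)

lemma vietaAux.surjective {M : ℕ} (hM : 1 ≤ M) : Function.Surjective (vieta M) := by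
  intro c
  set p : Polynomial ℂ := X ^ M + ∑ j : Fin M, C (c j) * X ^ (M - 1 - (j : ℕ)) with hp
  have hdegsum : (∑ j : Fin M, C (c j) * X ^ (M - 1 - (j : ℕ))).degree < (M : WithBot ℕ) := by
    refine lt_of_le_of_lt (degree_sum_le _ _) ?_
    rw [Finset.sup_lt_iff (by exact_mod_cast WithBot.bot_lt_coe M)]
    intro j _
    refine lt_of_le_of_lt (degree_C_mul_X_pow_le _ _) ?_
    exact_mod_cast (by omega : M - 1 - (j : ℕ) < M)
  have hmonic : p.Monic := monic_X_pow_add hdegsum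
  have hdeg : p.natDegree = M := by
    have hd : p.degree = (M : WithBot ℕ) := by
      rw [hp, degree_add_eq_left_of_degree_lt (by rwa [degree_X_pow]), degree_X_pow]
    exact natDegree_eq_of_degree_eq_some hd
  have hcoeff : ∀ k : Fin M, p.coeff (M - 1 - (k : ℕ)) = c k := by
    intro k
    have hkM := k.isLt
    rw [hp, coeff_add, coeff_X_pow, if_neg (by omega), zero_add, finset_sum_coeff,
      Finset.sum_eq_single k (fun j _ hj => ?_) (fun hk => absurd (Finset.mem_univ k) hk)]
    · rw [coeff_C_mul, coeff_X_pow, if_pos rfl, mul_one]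
    · have hjM := j.isLt
      rw [coeff_C_mul, coeff_X_pow, if_neg fun hEq => hj (Fin.ext (by omega)), mul_zero]
  have hsplits : p.Splits := IsAlgClosed.splits p
  have hcard : Multiset.card p.roots = M := by
    rw [splits_iff_card_roots.mp hsplits, hdeg]
  set l := p.roots.toList with hl'
  have hl : l.length = M := by rw [hl', Multiset.length_toList, hcard]
  refine ⟨fun k => l.get (Fin.cast hl.symm k), ?_⟩
  have hofn : List.ofFn (fun k : Fin M => l.get (Fin.cast hl.symm k)) = l := by
    apply List.ext_get
    · simp [hl]
    · intro n h1 h2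
      simp
  have hPz : (∏ m, (X - C ((fun k : Fin M => l.get (Fin.cast hl.symm k)) m))) = p := by
    rw [vietaAux.prod_eq]
    rw [Fin.univ_val_map, hofn]
    have : (l : Multiset ℂ) = p.roots := by rw [hl', Multiset.coe_toList]
    rw [this]
    exact prod_multiset_X_sub_C_of_monic_of_roots_card_eq hmonic (by rw [hcard, hdeg])
  funext k
  rw [vieta, hPz, hcoeff]

lemma vietaAux.isProperMap (M : ℕ) (hM : 1 ≤ M) : IsProperMap (vieta M) := by
  rw [isProperMap_iff_isCompact_preimage]
  refine ⟨vietaAux.continuous M, fun K hK => ?_⟩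
  rw [Metric.isCompact_iff_isClosed_bounded]
  refine ⟨hK.isClosed.preimage (vietaAux.continuous M), ?_⟩
  obtain ⟨R, hR⟩ := hK.isBounded.subset_closedBall 0
  set R' := max R 0 with hR'def
  have h0R' : (0 : ℝ) ≤ R' := le_max_right _ _
  have hKR : K ⊆ Metric.closedBall 0 R' :=
    hR.trans (Metric.closedBall_subset_closedBall (le_max_left _ _))
  refine (Metric.isBounded_closedBall (x := (0 : Fin M → ℂ)) (r := R' + 1)).subset ?_
  intro z hz
  rw [Set.mem_preimage] at hz
  have hzK := hKR hz
  rw [Metric.mem_closedBall, dist_zero_right] at hzK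
  rw [Metric.mem_closedBall, dist_zero_right,
    pi_norm_le_iff_of_nonneg (by positivity)]
  intro m
  have hroot : (∏ i, (X - C (z i))).IsRoot (z m) := by
    rw [IsRoot.def, eval_prod]
    exact Finset.prod_eq_zero (Finset.mem_univ m) (by simp)
  have hb := hroot.norm_lt_cauchyBound (vietaAux.monic z).ne_zero
  have hcoeffle : ∀ j ∈ Finset.range ((∏ i, (X - C (z i))).natDegree),
      ‖(∏ i, (X - C (z i))).coeff j‖₊ ≤ R'.toNNReal := by
    intro j hj
    rw [Finset.mem_range, vietaAux.natDegree_eq] at hj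
    have hco : (∏ i, (X - C (z i))).coeff j = vieta M z ⟨M - 1 - j, by omega⟩ := by
      show _ = (∏ i, (X - C (z i))).coeff (M - 1 - ((⟨M - 1 - j, by omega⟩ : Fin M) : ℕ))
      congr 1
      simp only [Fin.val_mk]
      omega
    rw [← NNReal.coe_le_coe, coe_nnnorm, Real.coe_toNNReal _ h0R', hco]
    exact le_trans (norm_le_pi_norm (vieta M z) _) hzK
  have hcb : cauchyBound (∏ i, (X - C (z i))) ≤ R'.toNNReal + 1 := by
    rw [cauchyBound, (vietaAux.monic z).leadingCoeff]
    simp only [nnnorm_one, div_one]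
    exact add_le_add_left (Finset.sup_le hcoeffle) 1
  have hlt := (lt_of_lt_of_le hb hcb).le
  rw [← NNReal.coe_le_coe] at hlt
  simpa [Real.coe_toNNReal _ h0R'] using hlt

end VietaAux

/-- For `M ≥ 1`, the Vieta map is continuous, surjective, a topological
quotient map, and its fibers are exactly the permutation orbits; consequently it
induces a homeomorphism from `ℂ^M / S_M` (unordered `M`-tuples, with the quotient
topology for the coordinate-permutation action) onto `ℂ^M`. -/
theorem vieta_isQuotientMap (M : ℕ) (hM : 1 ≤ M) :
    Continuous (vieta M) ∧
    Function.Surjective (vieta M) ∧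
    Topology.IsQuotientMap (vieta M) ∧
    (∀ u v : Fin M → ℂ,
      vieta M u = vieta M v ↔ ∃ σ : Equiv.Perm (Fin M), v = u ∘ σ) ∧
    ∃ h : Quotient (MulAction.orbitRel (Equiv.Perm (Fin M))ᵈᵐᵃ (Fin M → ℂ)) ≃ₜ
        (Fin M → ℂ),
      ∀ z : Fin M → ℂ, h ⟦z⟧ = vieta M z := by
  have hcont := vietaAux.continuous M
  have hsurj := vietaAux.surjective hM
  have hquot : Topology.IsQuotientMap (vieta M) :=
    ((vietaAux.isProperMap M hM).isClosedMap).isQuotientMap hcont hsurj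
  refine ⟨hcont, hsurj, hquot, fun u v => vietaAux.fiber hM u v, ?_⟩
  have hrel : ∀ u v : Fin M → ℂ,
      (MulAction.orbitRel (Equiv.Perm (Fin M))ᵈᵐᵃ (Fin M → ℂ)).r u v ↔
        vieta M u = vieta M v := by
    intro u v
    change u ∈ MulAction.orbit _ v ↔ _
    rw [MulAction.mem_orbit_iff]
    constructor
    · rintro ⟨g, rfl⟩
      refine ((vietaAux.fiber hM v (g • v)).mpr ⟨DomMulAct.mk.symm g, ?_⟩).symm
      funext a
      simp [DomMulAct.smul_apply]
    · intro h
      obtain ⟨σ, hσ⟩ := (vietaAux.fiber hM u v).mp h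
      refine ⟨DomMulAct.mk σ⁻¹, ?_⟩
      funext a
      simp [DomMulAct.smul_apply, hσ]
  set S := MulAction.orbitRel (Equiv.Perm (Fin M))ᵈᵐᵃ (Fin M → ℂ) with hS
  have hsound : ∀ u v : Fin M → ℂ, S.r u v → vieta M u = vieta M v :=
    fun u v h => (hrel u v).mp h
  let hlift : Quotient S → (Fin M → ℂ) := Quotient.lift (vieta M) hsound
  have hcomp : hlift ∘ (Quotient.mk' : _ → Quotient S) = vieta M := rfl
  have hcontl : Continuous hlift := by
    rw [continuous_coinduced_dom]
    exact hcont
  have hinj : Function.Injective hlift := by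
    intro a b
    refine Quotient.inductionOn₂ a b fun u v h => Quotient.sound ?_
    exact (hrel u v).mpr h
  have hsurjl : Function.Surjective hlift := fun c => by
    obtain ⟨z, hz⟩ := hsurj c
    exact ⟨⟦z⟧, hz⟩
  have hql : Topology.IsQuotientMap hlift := by
    refine Topology.IsQuotientMap.of_comp continuous_quotient_mk' hcontl ?_
    rw [hcomp]; exact hquot
  let e : Quotient S ≃ (Fin M → ℂ) := Equiv.ofBijective hlift ⟨hinj, hsurjl⟩
  have hes : (e.symm ∘ hlift) = id := funext fun x => e.symm_apply_apply x
  refine ⟨{ toEquiv := e, continuous_toFun := hcontl, continuous_invFun := ?_ },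
    fun z => rfl⟩
  rw [Equiv.invFun_as_coe, hql.continuous_iff, hes]
  exact continuous_id
end
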